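/- Let ω: S² → S⁴ be a nonconstant, smooth, S¹-equivariant harmonic sphere which is not linearly full. Then the real linear span of ω(S²) in ℝ⊕ℂ⊕ℂ is either ℝ⊕ℂ⊕{0} or ℝ⊕{0}⊕ℂ. -/

import Mathlib

noncomputable section

open MeasureTheory
open scoped Classical

abbrev E3 : Type := EuclideanSpace ℝ (Fin 3)

abbrev V5 : Type := ℝ × ℂ × ℂ

/-- Squared Euclidean norm on ℝ ⊕ ℂ ⊕ ℂ. -/
def nsq (p : V5) : ℝ := p.1 ^ 2 + Complex.normSq p.2.1 + Complex.normSq p.2.2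

/-- Real inner product on ℝ ⊕ ℂ ⊕ ℂ. -/
def vdot (p q : V5) : ℝ :=
  p.1 * q.1 + (p.2.1 * (starRingEnd ℂ) q.2.1).re + (p.2.2 * (starRingEnd ℂ) q.2.2).re

/-- The circle action R_α · (t, ζ₁, ζ₂) = (t, e^{iα}ζ₁, e^{2iα}ζ₂) on ℝ ⊕ ℂ ⊕ ℂ. -/
def circAct (α : ℝ) (p : V5) : V5 :=
  (p.1, Complex.exp (Complex.I * (α : ℂ)) * p.2.1,
    Complex.exp (2 * Complex.I * (α : ℂ)) * p.2.2)

/-- Rotation of ℝ³ by angle α about the x₃-axis. -/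
def rot3 (α : ℝ) (x : E3) : E3 :=
  EuclideanSpace.single (0 : Fin 3) (Real.cos α * x 0 - Real.sin α * x 1) +
    EuclideanSpace.single (1 : Fin 3) (Real.sin α * x 0 + Real.cos α * x 1) +
    EuclideanSpace.single (2 : Fin 3) (x 2)

/-- The unit sphere S² ⊂ ℝ³. -/
def sphere2 : Set E3 := Metric.sphere (0 : E3) 1

def northPole : E3 := EuclideanSpace.single (2 : Fin 3) (1 : ℝ)

def southPole : E3 := EuclideanSpace.single (2 : Fin 3) (-1 : ℝ)

/-- Degree-zero homogeneous extension of a map defined on the sphere. -/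
def homExt (ω : E3 → V5) : E3 → V5 := fun x => ω (‖x‖⁻¹ • x)

def homExtR (g : E3 → ℝ) : E3 → ℝ := fun x => g (‖x‖⁻¹ • x)

/-- Squared Euclidean norm of the differential. -/
def gradSq (f : E3 → V5) (x : E3) : ℝ :=
  ∑ i : Fin 3, nsq (fderiv ℝ f x (EuclideanSpace.single i (1 : ℝ)))

def gradSqR (f : E3 → ℝ) (x : E3) : ℝ :=
  ∑ i : Fin 3, fderiv ℝ f x (EuclideanSpace.single i (1 : ℝ)) ^ 2

/-- Componentwise Euclidean Laplacian. -/
def lap (f : E3 → V5) (x : E3) : V5 :=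
  ∑ i : Fin 3,
    fderiv ℝ (fun y => fderiv ℝ f y (EuclideanSpace.single i (1 : ℝ))) x
      (EuclideanSpace.single i (1 : ℝ))

/-- ω : S² → S⁴ is a (smooth) harmonic sphere: it maps the sphere into the unit
sphere of ℝ ⊕ ℂ ⊕ ℂ, its degree-zero homogeneous extension Q is smooth away from
the origin, and ΔQ + |∇Q|²Q = 0 on ℝ³ ∖ {0}. -/
def IsHarmonicSphere (ω : E3 → V5) : Prop :=
  (∀ x ∈ sphere2, nsq (ω x) = 1) ∧
    ContDiffOn ℝ (⊤ : ℕ∞) (homExt ω) {(0 : E3)}ᶜ ∧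
    ∀ x : E3, x ≠ 0 → lap (homExt ω) x + gradSq (homExt ω) x • homExt ω x = 0

/-- S¹-equivariance of a sphere map. -/
def EquivariantS (ω : E3 → V5) : Prop :=
  ∀ α : ℝ, ∀ x ∈ sphere2, ω (rot3 α x) = circAct α (ω x)

/-- S¹-equivariance of a vector field on ℝ³. -/
def EquivariantV (X : E3 → V5) : Prop :=
  ∀ (α : ℝ) (x : E3), X (rot3 α x) = circAct α (X x)

/-- Tangential part X_T = X - (w·X)w. -/
def tangPart (w X : E3 → V5) : E3 → V5 := fun x => X x - vdot (w x) (X x) • w x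

/-- Second variation δ²E₀(w)[X] = ∫ (|∇X_T|² - |∇w|²|X_T|²). -/
def secondVar (w X : E3 → V5) : ℝ :=
  ∫ x : E3, (gradSq (tangPart w X) x - gradSq w x * nsq (tangPart w X x))

/-- Stability of a tangent map within the S¹-equivariant class. -/
def IsStable (w : E3 → V5) : Prop :=
  ∀ X : E3 → V5, ContDiff ℝ (⊤ : ℕ∞) X → HasCompactSupport X → EquivariantV X →
    0 ≤ secondVar w X

def conj' (z : ℂ) : ℂ := (starRingEnd ℂ) z

/-- The twistor fibration, in homogeneous coordinates on ℂ⁴ ∖ {0}. -/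
def tau4 (w0 w1 w2 w3 : ℂ) : V5 :=
  ((Complex.normSq w0 + Complex.normSq w3 - Complex.normSq w1 - Complex.normSq w2) /
      (Complex.normSq w0 + Complex.normSq w1 + Complex.normSq w2 + Complex.normSq w3),
    2 * (conj' w0 * w1 + conj' w2 * w3) /
      ((Complex.normSq w0 + Complex.normSq w1 + Complex.normSq w2 + Complex.normSq w3 : ℝ) : ℂ),
    2 * (conj' w0 * w2 - conj' w1 * w3) /
      ((Complex.normSq w0 + Complex.normSq w1 + Complex.normSq w2 + Complex.normSq w3 : ℝ) : ℂ))

/-- Inverse stereographic projection ℂ → S² (from the south pole). -/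
def stInv (z : ℂ) : E3 :=
  EuclideanSpace.single (0 : Fin 3) (2 * z.re / (1 + Complex.normSq z)) +
    EuclideanSpace.single (1 : Fin 3) (2 * z.im / (1 + Complex.normSq z)) +
    EuclideanSpace.single (2 : Fin 3) ((1 - Complex.normSq z) / (1 + Complex.normSq z))

/-- Equatorial embedding ω_eq^{(1)}(x) = (x₃, x₁ + ix₂, 0). -/
def omegaEq1 (x : E3) : V5 := (x 2, (x 0 : ℂ) + (x 1 : ℂ) * Complex.I, 0)

/-- Equatorial embedding ω_eq^{(2)}(x) = (x₃, 0, x₁ + ix₂). -/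
def omegaEq2 (x : E3) : V5 := (x 2, 0, (x 0 : ℂ) + (x 1 : ℂ) * Complex.I)

/-- The horizontal algebraic curve composed with the twistor fibration. -/
def liftCurve (μ1 μ2 z0 z1 : ℂ) : V5 :=
  tau4 (z0 ^ 3) (μ1 * z0 ^ 2 * z1) (μ2 * z0 * z1 ^ 2) (-(μ1 * μ2 / 3) * z1 ^ 3)

/-- The explicit two-parameter family ω_{μ₁,μ₂} of equivariant harmonic spheres,
as a map defined on S² via the identification [z₀, z₁] ↦ σ₂⁻¹(z₁/z₀). -/
def omegaFam (μ1 μ2 : ℂ) (x : E3) : V5 :=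
  if x = southPole then
    if μ1 = 0 ∧ μ2 = 0 then ((1 : ℝ), 0, 0)
    else if μ1 ≠ 0 ∧ μ2 ≠ 0 then liftCurve μ1 μ2 0 1
    else ((-1 : ℝ), 0, 0)
  else liftCurve μ1 μ2 ((1 + x 2 : ℝ) : ℂ) ((x 0 : ℂ) + (x 1 : ℂ) * Complex.I)

/-- Wirtinger derivative ∂f/∂z̄ = ½(∂_{x₁} + i ∂_{x₂})f. -/
def wd (f : ℂ → ℂ) (z : ℂ) : ℂ :=
  (1 / 2 : ℂ) * (fderiv ℝ f z 1 + Complex.I * fderiv ℝ f z Complex.I)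

/-- Surface (2-dimensional Hausdorff) measure on ℝ³. -/
def surf : Measure E3 := Measure.hausdorffMeasure 2

/-- The subspace ℝ ⊕ ℂ ⊕ {0} of ℝ ⊕ ℂ ⊕ ℂ. -/
def L01 : Submodule ℝ V5 :=
  (⊤ : Submodule ℝ ℝ).prod ((⊤ : Submodule ℝ ℂ).prod (⊥ : Submodule ℝ ℂ))

/-- The subspace ℝ ⊕ {0} ⊕ ℂ of ℝ ⊕ ℂ ⊕ ℂ. -/
def L02 : Submodule ℝ V5 :=
  (⊤ : Submodule ℝ ℝ).prod ((⊥ : Submodule ℝ ℂ).prod (⊤ : Submodule ℝ ℂ))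


section Aux

lemma rot3_apply' (α : ℝ) (x : E3) :
    rot3 α x 0 = Real.cos α * x 0 - Real.sin α * x 1 ∧
    rot3 α x 1 = Real.sin α * x 0 + Real.cos α * x 1 ∧
    rot3 α x 2 = x 2 := by
  refine ⟨?_, ?_, ?_⟩ <;>
    simp [rot3, EuclideanSpace.single_apply, PiLp.add_apply]

lemma rot3_np' (α : ℝ) : rot3 α northPole = northPole := by
  have h0 : northPole 0 = 0 := by simp [northPole, EuclideanSpace.single_apply]
  have h1 : northPole 1 = 0 := by simp [northPole, EuclideanSpace.single_apply]
  refine PiLp.ext fun i => ?_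
  obtain ⟨r0, r1, r2⟩ := rot3_apply' α northPole
  fin_cases i
  · rw [show ((⟨0, by norm_num⟩ : Fin 3)) = (0 : Fin 3) from rfl, r0, h0, h1]; ring_nf
  · rw [show ((⟨1, by norm_num⟩ : Fin 3)) = (1 : Fin 3) from rfl, r1, h0, h1]; ring_nf
  · rw [show ((⟨2, by norm_num⟩ : Fin 3)) = (2 : Fin 3) from rfl, r2]

lemma np_mem' : northPole ∈ sphere2 := by
  simp only [sphere2, mem_sphere_iff_norm, sub_zero, northPole]
  rw [EuclideanSpace.norm_eq]
  norm_num [EuclideanSpace.single_apply, Fin.sum_univ_three]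

lemma rot3_mem' (α : ℝ) {x : E3} (hx : x ∈ sphere2) : rot3 α x ∈ sphere2 := by
  obtain ⟨r0, r1, r2⟩ := rot3_apply' α x
  simp only [sphere2, mem_sphere_iff_norm, sub_zero] at hx ⊢
  rw [EuclideanSpace.norm_eq] at hx ⊢
  rw [Fin.sum_univ_three] at hx ⊢
  rw [r0, r1, r2]
  have h : Real.cos α ^ 2 + Real.sin α ^ 2 = 1 := Real.cos_sq_add_sin_sq α
  rw [show ‖Real.cos α * x 0 - Real.sin α * x 1‖ ^ 2 +
      ‖Real.sin α * x 0 + Real.cos α * x 1‖ ^ 2 + ‖x 2‖ ^ 2 =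
      ‖x 0‖ ^ 2 + ‖x 1‖ ^ 2 + ‖x 2‖ ^ 2 by
    simp only [Real.norm_eq_abs, sq_abs]; nlinarith [h]]
  exact hx

lemma circAct_add' (α : ℝ) (p q : V5) :
    circAct α (p + q) = circAct α p + circAct α q := by
  simp [circAct, Prod.ext_iff, mul_add]

lemma circAct_smul' (α : ℝ) (c : ℝ) (p : V5) :
    circAct α (c • p) = c • circAct α p := by
  refine Prod.ext rfl (Prod.ext ?_ ?_) <;>
    simp only [circAct, Prod.smul_fst, Prod.smul_snd, smul_eq_mul, Complex.real_smul] <;> ring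

lemma circAct_pi' (p : V5) : circAct Real.pi p = (p.1, -p.2.1, p.2.2) := by
  have h1 : Complex.exp (Complex.I * (Real.pi : ℂ)) = -1 := by
    rw [mul_comm]; exact Complex.exp_pi_mul_I
  have h2 : Complex.exp (2 * Complex.I * (Real.pi : ℂ)) = 1 := by
    rw [show (2 * Complex.I * (Real.pi : ℂ)) = 2 * (Real.pi : ℂ) * Complex.I by ring]
    exact Complex.exp_two_pi_mul_I
  simp [circAct, h1, h2]

lemma circAct_half_pi' (p : V5) : (circAct (Real.pi / 2) p).2.2 = -p.2.2 := by
  have h2 : Complex.exp (2 * Complex.I * ((Real.pi / 2 : ℝ) : ℂ)) = -1 := by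
    rw [show (2 * Complex.I * ((Real.pi / 2 : ℝ) : ℂ)) = (Real.pi : ℂ) * Complex.I by
      push_cast; ring]
    exact Complex.exp_pi_mul_I
  show Complex.exp (2 * Complex.I * ((Real.pi / 2 : ℝ) : ℂ)) * p.2.2 = -p.2.2
  rw [h2]; ring

/-- The real-linear embedding z ↦ (0, z, 0). -/
def J1 : ℂ →ₗ[ℝ] V5 where
  toFun z := (0, z, 0)
  map_add' a b := by simp [Prod.ext_iff]
  map_smul' c a := by simp [Prod.ext_iff]

/-- The real-linear embedding w ↦ (0, 0, w). -/
def J2 : ℂ →ₗ[ℝ] V5 where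
  toFun w := (0, 0, w)
  map_add' a b := by simp [Prod.ext_iff]
  map_smul' c a := by simp [Prod.ext_iff]

lemma J1_apply (z : ℂ) : J1 z = ((0 : ℝ), z, (0 : ℂ)) := rfl

lemma J2_apply (w : ℂ) : J2 w = ((0 : ℝ), (0 : ℂ), w) := rfl

lemma rotInv_bot_or_top (W : Submodule ℝ ℂ)
    (hW : ∀ (α : ℝ) (z : ℂ), z ∈ W → Complex.exp (Complex.I * (α : ℂ)) * z ∈ W) :
    W = ⊥ ∨ W = ⊤ := by
  by_cases h : W = ⊥
  · exact Or.inl h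
  right
  obtain ⟨z, hzW, hz0⟩ := Submodule.exists_mem_ne_zero_of_ne_bot h
  rw [eq_top_iff]
  intro u _
  set c : ℂ := u / z with hc
  have key : u = (‖c‖ : ℝ) • (Complex.exp (Complex.I * ((c.arg : ℝ) : ℂ)) * z) := by
    rw [Complex.real_smul, ← mul_assoc, mul_comm Complex.I ((c.arg : ℝ) : ℂ),
      Complex.norm_mul_exp_arg_mul_I, hc, div_mul_cancel₀ _ hz0]
  rw [key]
  exact W.smul_mem _ (hW _ _ hzW)

end Aux

/-- If ω : S² → S⁴ is a nonconstant smooth S¹-equivariant harmonic sphere which is not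
linearly full, then the real linear span of its image is either ℝ ⊕ ℂ ⊕ {0} or
ℝ ⊕ {0} ⊕ ℂ. -/
theorem statement4 (ω : E3 → V5)
    (hH : IsHarmonicSphere ω) (heq : EquivariantS ω)
    (hnc : ∃ x ∈ sphere2, ∃ y ∈ sphere2, ω x ≠ ω y)
    (hnf : Submodule.span ℝ (ω '' sphere2) ≠ ⊤) :
    Submodule.span ℝ (ω '' sphere2) = L01 ∨ Submodule.span ℝ (ω '' sphere2) = L02 := by
  classical
  set V := Submodule.span ℝ (ω '' sphere2) with hV
  -- V is invariant under the circle action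
  have hgen : ∀ (α : ℝ), ∀ x ∈ sphere2, circAct α (ω x) ∈ V := by
    intro α x hx
    rw [← heq α x hx]
    exact Submodule.subset_span ⟨rot3 α x, rot3_mem' α hx, rfl⟩
  have hInv : ∀ (α : ℝ), ∀ v ∈ V, circAct α v ∈ V := by
    intro α v hv
    induction hv using Submodule.span_induction with
    | mem p hp =>
      obtain ⟨x, hx, rfl⟩ := hp
      exact hgen α x hx
    | zero => convert V.zero_mem using 1; simp [circAct, Prod.ext_iff]
    | add a b _ _ ha hb => rw [circAct_add']; exact V.add_mem ha hb
    | smul c a _ ha => rw [circAct_smul']; exact V.smul_mem c ha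
  -- the value at the north pole
  have hNval : ω northPole = ((ω northPole).1, 0, 0) := by
    have hπ := heq Real.pi northPole np_mem'
    rw [rot3_np', circAct_pi'] at hπ
    have hz : (ω northPole).2.1 = 0 := by
      have h := congrArg (fun p : V5 => p.2.1) hπ
      simp only at h
      have h2 : (ω northPole).2.1 + (ω northPole).2.1 = 0 := by
        nth_rewrite 2 [h]; ring
      exact add_self_eq_zero.mp h2
    have hw : (ω northPole).2.2 = 0 := by
      have hπ2 := heq (Real.pi / 2) northPole np_mem'
      rw [rot3_np'] at hπ2
      have h := congrArg (fun p : V5 => p.2.2) hπ2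
      simp only [circAct_half_pi'] at h
      have h2 : (ω northPole).2.2 + (ω northPole).2.2 = 0 := by
        nth_rewrite 2 [h]; ring
      exact add_self_eq_zero.mp h2
    exact Prod.ext rfl (Prod.ext hz hw)
  have htsq : (ω northPole).1 ^ 2 = 1 := by
    have := hH.1 northPole np_mem'
    rw [hNval] at this
    simpa [nsq] using this
  have ht0 : (ω northPole).1 ≠ 0 := by
    intro h; rw [h] at htsq; norm_num at htsq
  have hNP : (((1 : ℝ), (0 : ℂ), (0 : ℂ)) : V5) ∈ V := by
    have hm : ω northPole ∈ V := Submodule.subset_span ⟨northPole, np_mem', rfl⟩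
    have := V.smul_mem ((ω northPole).1)⁻¹ hm
    convert this using 1
    rw [hNval]
    refine Prod.ext ?_ (Prod.ext ?_ ?_) <;>
      simp [Prod.smul_fst, Prod.smul_snd, inv_mul_cancel₀ ht0]
  -- decomposition of elements of V
  have hdec : ∀ v ∈ V, (((v.1 : ℝ), (0:ℂ), (0:ℂ)) : V5) ∈ V ∧
      J1 v.2.1 ∈ V ∧ J2 v.2.2 ∈ V := by
    intro v hv
    have h1 := hInv Real.pi v hv
    rw [circAct_pi'] at h1
    have ha : ((v.1, (0:ℂ), v.2.2) : V5) ∈ V := by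
      have hm := V.smul_mem (1/2 : ℝ) (V.add_mem hv h1)
      convert hm using 1
      refine Prod.ext ?_ (Prod.ext ?_ ?_) <;>
        simp [Prod.smul_fst, Prod.smul_snd, Prod.ext_iff, Complex.real_smul] <;> ring
    have hb : ((v.1, (0:ℂ), (0:ℂ)) : V5) ∈ V := by
      have h2 := hInv (Real.pi / 2) _ ha
      have h2' : ((v.1, Complex.exp (Complex.I * ((Real.pi/2 : ℝ) : ℂ)) * 0,
          -v.2.2) : V5) ∈ V := by
        convert h2 using 1
        refine Prod.ext rfl (Prod.ext rfl ?_)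
        rw [circAct_half_pi']
      have hm := V.smul_mem (1/2 : ℝ) (V.add_mem ha h2')
      convert hm using 1
      refine Prod.ext ?_ (Prod.ext ?_ ?_) <;>
        simp [Prod.smul_fst, Prod.smul_snd, Complex.real_smul] <;> ring
    refine ⟨hb, ?_, ?_⟩
    · have := V.sub_mem hv ha
      convert this using 1
      simp [J1, Prod.ext_iff]
    · have := V.sub_mem ha hb
      convert this using 1
      simp [J2, Prod.ext_iff]
  -- the two component subspaces
  set W1 : Submodule ℝ ℂ := V.comap J1 with hW1def
  set W2 : Submodule ℝ ℂ := V.comap J2 with hW2def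
  have hW1rot : ∀ (α : ℝ) (z : ℂ), z ∈ W1 → Complex.exp (Complex.I * (α : ℂ)) * z ∈ W1 := by
    intro α z hz
    simp only [hW1def, Submodule.mem_comap] at hz ⊢
    have := hInv α _ hz
    convert this using 1
    simp [J1, circAct, Prod.ext_iff]
  have hW2rot : ∀ (α : ℝ) (w : ℂ), w ∈ W2 → Complex.exp (Complex.I * (α : ℂ)) * w ∈ W2 := by
    intro α w hw
    simp only [hW2def, Submodule.mem_comap] at hw ⊢
    have hmem := hInv (α / 2) _ hw
    have hexp : (2 : ℂ) * Complex.I * ((α / 2 : ℝ) : ℂ) = Complex.I * (α : ℂ) := by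
      push_cast; ring
    have heq2 : circAct (α / 2) (J2 w) = J2 (Complex.exp (Complex.I * (α : ℂ)) * w) := by
      rw [J2_apply, J2_apply]
      refine Prod.ext rfl (Prod.ext (mul_zero _) ?_)
      show Complex.exp (2 * Complex.I * ((α / 2 : ℝ) : ℂ)) * w =
        Complex.exp (Complex.I * (α : ℂ)) * w
      rw [hexp]
    rwa [heq2] at hmem
  -- if both components are in the span, the vector is in the span
  have hbuild : ∀ v : V5, v.2.1 ∈ W1 → v.2.2 ∈ W2 → v ∈ V := by
    intro v h1 h2
    simp only [hW1def, hW2def, Submodule.mem_comap] at h1 h2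
    have hm := V.add_mem (V.add_mem (V.smul_mem v.1 hNP) h1) h2
    convert hm using 1
    simp [J1, J2, Prod.ext_iff, Complex.real_smul]
  rcases rotInv_bot_or_top W1 hW1rot with hB1 | hT1 <;>
    rcases rotInv_bot_or_top W2 hW2rot with hB2 | hT2
  · -- both trivial : ω takes values (±1, 0, 0), contradiction with nonconstancy
    exfalso
    have hval : ∀ x ∈ sphere2, ω x = ((ω x).1, 0, 0) := by
      intro x hx
      have hm : ω x ∈ V := Submodule.subset_span ⟨x, hx, rfl⟩
      obtain ⟨_, hz, hw⟩ := hdec _ hm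
      have hz0 : (ω x).2.1 = 0 := by
        have : (ω x).2.1 ∈ W1 := Submodule.mem_comap.mpr hz
        rwa [hB1, Submodule.mem_bot] at this
      have hw0 : (ω x).2.2 = 0 := by
        have : (ω x).2.2 ∈ W2 := Submodule.mem_comap.mpr hw
        rwa [hB2, Submodule.mem_bot] at this
      exact Prod.ext rfl (Prod.ext hz0 hw0)
    have hpm : ∀ x ∈ sphere2, (ω x).1 = 1 ∨ (ω x).1 = -1 := by
      intro x hx
      have h1 := hH.1 x hx
      rw [hval x hx] at h1
      simp only [nsq, Complex.normSq_zero] at h1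
      have : (ω x).1 * (ω x).1 = 1 := by nlinarith
      exact mul_self_eq_one_iff.mp this
    -- continuity of the first component on the sphere
    have hsub : sphere2 ⊆ ({(0 : E3)}ᶜ : Set E3) := by
      intro x hx
      simp only [Set.mem_compl_iff, Set.mem_singleton_iff]
      intro h
      rw [sphere2, mem_sphere_iff_norm, sub_zero, h] at hx
      simp at hx
    have hco : ContinuousOn (fun x => (ω x).1) sphere2 := by
      have h1 : ContinuousOn (homExt ω) sphere2 :=
        (hH.2.1.continuousOn).mono hsub
      have h2 : ContinuousOn (fun x => (homExt ω x).1) sphere2 :=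
        continuous_fst.comp_continuousOn h1
      refine h2.congr fun x hx => ?_
      have hx1 : ‖x‖ = 1 := by rwa [sphere2, mem_sphere_iff_norm, sub_zero] at hx
      simp [homExt, hx1]
    have hconn : IsConnected sphere2 := by
      apply isConnected_sphere ?_ 0 zero_le_one
      have h3 : Module.finrank ℝ E3 = 3 := finrank_euclideanSpace_fin
      rw [← Module.finrank_eq_rank, h3]
      norm_num
    have hpre : IsPreconnected ((fun x => (ω x).1) '' sphere2) :=
      hconn.isPreconnected.image _ hco
    have hcover : ((fun x => (ω x).1) '' sphere2) ⊆ Set.Iio (0:ℝ) ∪ Set.Ioi (0:ℝ) := by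
      rintro t ⟨x, hx, rfl⟩
      show (ω x).1 ∈ Set.Iio (0:ℝ) ∪ Set.Ioi (0:ℝ)
      rcases hpm x hx with h | h <;> rw [h] <;> norm_num
    have hdisj : Disjoint (Set.Iio (0:ℝ)) (Set.Ioi (0:ℝ)) := by
      rw [Set.disjoint_iff]
      rintro t ⟨h1, h2⟩
      exact absurd (lt_trans (Set.mem_Iio.mp h1) (Set.mem_Ioi.mp h2)) (lt_irrefl t)
    obtain ⟨x, hx, y, hy, hne⟩ := hnc
    have hsame : (ω x).1 = (ω y).1 := by
      rcases hpre.subset_or_subset isOpen_Iio isOpen_Ioi hdisj hcover with hs | hs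
      · have hx' : (ω x).1 = -1 := by
          rcases hpm x hx with h | h
          · exfalso
            have hmem := hs ⟨x, hx, rfl⟩
            simp only at hmem
            rw [h] at hmem; norm_num at hmem
          · exact h
        have hy' : (ω y).1 = -1 := by
          rcases hpm y hy with h | h
          · exfalso
            have hmem := hs ⟨y, hy, rfl⟩
            simp only at hmem
            rw [h] at hmem; norm_num at hmem
          · exact h
        rw [hx', hy']
      · have hx' : (ω x).1 = 1 := by
          rcases hpm x hx with h | h
          · exact h
          · exfalso
            have hmem := hs ⟨x, hx, rfl⟩
            simp only at hmem
            rw [h] at hmem; norm_num at hmem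
        have hy' : (ω y).1 = 1 := by
          rcases hpm y hy with h | h
          · exact h
          · exfalso
            have hmem := hs ⟨y, hy, rfl⟩
            simp only at hmem
            rw [h] at hmem; norm_num at hmem
        rw [hx', hy']
    exact hne (by rw [hval x hx, hval y hy, hsame])
  · -- W1 = ⊥, W2 = ⊤ : span is L02
    right
    apply le_antisymm
    · rw [hV, Submodule.span_le]
      rintro p ⟨x, hx, rfl⟩
      have hm : ω x ∈ V := Submodule.subset_span ⟨x, hx, rfl⟩
      obtain ⟨_, hz, _⟩ := hdec _ hm
      have hz0 : (ω x).2.1 = 0 := by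
        have : (ω x).2.1 ∈ W1 := Submodule.mem_comap.mpr hz
        rwa [hB1, Submodule.mem_bot] at this
      refine Submodule.mem_prod.mpr ⟨trivial, Submodule.mem_prod.mpr ⟨?_, trivial⟩⟩
      rw [Submodule.mem_bot]; exact hz0
    · intro v hv
      have hz0 : v.2.1 = 0 := by
        have h := (Submodule.mem_prod.mp (Submodule.mem_prod.mp hv).2).1
        rwa [Submodule.mem_bot] at h
      refine hbuild v ?_ ?_
      · rw [hz0]; exact W1.zero_mem
      · rw [hT2]; trivial
  · -- W1 = ⊤, W2 = ⊥ : span is L01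
    left
    apply le_antisymm
    · rw [hV, Submodule.span_le]
      rintro p ⟨x, hx, rfl⟩
      have hm : ω x ∈ V := Submodule.subset_span ⟨x, hx, rfl⟩
      obtain ⟨_, _, hw⟩ := hdec _ hm
      have hw0 : (ω x).2.2 = 0 := by
        have : (ω x).2.2 ∈ W2 := Submodule.mem_comap.mpr hw
        rwa [hB2, Submodule.mem_bot] at this
      refine Submodule.mem_prod.mpr ⟨trivial, Submodule.mem_prod.mpr ⟨trivial, ?_⟩⟩
      rw [Submodule.mem_bot]; exact hw0
    · intro v hv
      have hw0 : v.2.2 = 0 := by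
        have h := (Submodule.mem_prod.mp (Submodule.mem_prod.mp hv).2).2
        rwa [Submodule.mem_bot] at h
      refine hbuild v ?_ ?_
      · rw [hT1]; trivial
      · rw [hw0]; exact W2.zero_mem
  · -- both full : span is everything, contradicting hnf
    exfalso
    apply hnf
    rw [eq_top_iff]
    intro v _
    refine hbuild v ?_ ?_
    · rw [hT1]; trivial
    · rw [hT2]; trivial
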